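/- In the zero-divisor graph of R = 𝔽_p[x]/(x^{2b}) with b ≥ 1, a vertex v with mindeg(v) = i has degree p^i − 1 if i < b, and degree p^i − 2 if i ≥ b. -/

import Mathlib

open Polynomial

noncomputable section

/-- The truncated polynomial ring `𝔽_p[x]/(x^c)`. -/
abbrev TPR (p c : ℕ) : Type := AdjoinRoot (X ^ c : (ZMod p)[X])

instance (p c : ℕ) [Fact p.Prime] : Finite (TPR p c) := by
  have hb : PowerBasis (ZMod p) (TPR p c) :=
    AdjoinRoot.powerBasis (pow_ne_zero c Polynomial.X_ne_zero)
  have : Module.Finite (ZMod p) (TPR p c) := Module.Finite.of_basis hb.basis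
  exact Module.finite_of_finite (ZMod p)

/-- The canonical representative (the unique representative of degree `< c`)
of an element of `𝔽_p[x]/(x^c)`. -/
def canon {p c : ℕ} (f : TPR p c) : (ZMod p)[X] :=
  Function.surjInv (AdjoinRoot.mk_surjective (g := (X ^ c : (ZMod p)[X]))) f %ₘ X ^ c

/-- The minimal degree: the least exponent with nonzero coefficient in the
canonical representative. -/
def mindeg {p c : ℕ} (f : TPR p c) : ℕ := (canon f).natTrailingDegree

/-- The set of nonzero zero-divisors of `𝔽_p[x]/(x^c)`. -/
def zd (p c : ℕ) : Set (TPR p c) := {f | f ≠ 0 ∧ ∃ g, g ≠ 0 ∧ f * g = 0}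

/-- The zero-divisor graph of `𝔽_p[x]/(x^c)`: vertices are the nonzero
zero-divisors, and `f ~ g` iff `f ≠ g` and `f * g = 0`. -/
def zdGraph (p c : ℕ) : SimpleGraph (zd p c) where
  Adj a b := a ≠ b ∧ (a : TPR p c) * (b : TPR p c) = 0
  symm := ⟨fun a b h => ⟨h.1.symm, by rw [mul_comm]; exact h.2⟩⟩
  loopless := ⟨fun a h => h.1 rfl⟩

variable {p c : ℕ} [Fact p.Prime]

lemma mk_canon (f : TPR p c) : AdjoinRoot.mk (X ^ c) (canon f) = f := by
  unfold canon
  rw [modByMonic_eq_sub_mul_div _ (X ^ c), map_sub, map_mul, AdjoinRoot.mk_self,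
    zero_mul, sub_zero]
  exact Function.surjInv_eq _ f

lemma degree_canon (f : TPR p c) : (canon f).degree < c := by
  have := degree_modByMonic_lt
    (Function.surjInv (AdjoinRoot.mk_surjective (g := (X ^ c : (ZMod p)[X]))) f)
    (monic_X_pow (R := ZMod p) c)
  simpa [canon, degree_X_pow] using this

lemma canon_inj {f g : (ZMod p)[X]} (hf : f.degree < c) (hg : g.degree < c)
    (h : AdjoinRoot.mk (X ^ c) f = AdjoinRoot.mk (X ^ c) g) : f = g := by
  rw [AdjoinRoot.mk_eq_mk] at h
  by_contra hne
  have h0 : f - g ≠ 0 := sub_ne_zero.mpr hne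
  have h1 : (c : WithBot ℕ) ≤ (f - g).degree := by
    simpa [degree_X_pow] using degree_le_of_dvd h h0
  exact absurd (lt_of_le_of_lt h1 (lt_of_le_of_lt (degree_sub_le f g) (max_lt hf hg)))
    (lt_irrefl _)

lemma canon_ne_zero {f : TPR p c} (hf : f ≠ 0) : canon f ≠ 0 := by
  intro h; apply hf; rw [← mk_canon f, h, map_zero]

lemma mindeg_lt {f : TPR p c} (hf : f ≠ 0) : mindeg f < c :=
  lt_of_le_of_lt (natTrailingDegree_le_natDegree _)
    ((natDegree_lt_iff_degree_lt (canon_ne_zero hf)).mpr (degree_canon f))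

lemma canon_factor (f : TPR p c) (hf : f ≠ 0) :
    ∃ u : (ZMod p)[X], u.coeff 0 ≠ 0 ∧ canon f = X ^ mindeg f * u := by
  obtain ⟨u, hu⟩ : X ^ mindeg f ∣ canon f :=
    X_pow_dvd_iff.mpr fun d hd => coeff_eq_zero_of_lt_natTrailingDegree hd
  refine ⟨u, ?_, hu⟩
  have h0 : (canon f).coeff (mindeg f) ≠ 0 :=
    coeff_natTrailingDegree_ne_zero.mpr (canon_ne_zero hf)
  have : (canon f).coeff (mindeg f) = u.coeff 0 := by
    rw [hu]
    simpa using coeff_X_pow_mul u (mindeg f) 0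
  rwa [this] at h0

lemma isUnit_mk {u : (ZMod p)[X]} (hu : u.coeff 0 ≠ 0) :
    IsUnit (AdjoinRoot.mk (X ^ c) u) := by
  have hX : ¬ (X : (ZMod p)[X]) ∣ u := fun h => hu (X_dvd_iff.mp h)
  have hcop : IsCoprime (X ^ c : (ZMod p)[X]) u :=
    IsCoprime.pow_left ((Polynomial.irreducible_X.coprime_iff_not_dvd).mpr hX)
  obtain ⟨a, b, hab⟩ := hcop
  refine IsUnit.of_mul_eq_one (AdjoinRoot.mk _ b) ?_
  have := congrArg (AdjoinRoot.mk (X ^ c)) hab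
  simp only [map_add, map_mul, AdjoinRoot.mk_self, mul_zero, zero_add, map_one] at this
  rw [mul_comm]; exact this

lemma root_pow_eq_zero_iff {k : ℕ} :
    (AdjoinRoot.root (X ^ c : (ZMod p)[X])) ^ k = 0 ↔ c ≤ k := by
  rw [← AdjoinRoot.mk_X, ← map_pow, ← map_zero (AdjoinRoot.mk (X ^ c : (ZMod p)[X])),
    AdjoinRoot.mk_eq_mk, sub_zero]
  exact pow_dvd_pow_iff X_ne_zero Polynomial.not_isUnit_X

lemma card_ann {i : ℕ} (hic : i ≤ c) :
    Set.ncard {g : TPR p c | g * (AdjoinRoot.root (X ^ c : (ZMod p)[X])) ^ i = 0} = p ^ i := by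
  classical
  set φ : degreeLT (ZMod p) i → TPR p c :=
    fun w => AdjoinRoot.mk _ (X ^ (c - i) * (w : (ZMod p)[X])) with hφ
  have hdeg : ∀ w : degreeLT (ZMod p) i,
      (X ^ (c - i) * (w : (ZMod p)[X])).degree < (c : WithBot ℕ) := by
    rintro ⟨w, hw⟩
    rw [mem_degreeLT] at hw
    rcases eq_or_ne w 0 with rfl | hw0
    · simp only [Submodule.coe_mk, mul_zero, degree_zero]
      exact WithBot.bot_lt_coe c
    · rw [degree_mul, degree_X_pow, degree_eq_natDegree hw0]
      have hwn : w.natDegree < i := by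
        rwa [← natDegree_lt_iff_degree_lt hw0] at hw
      have : (c - i) + w.natDegree < c := by omega
      exact_mod_cast (by exact_mod_cast this :
        ((c - i + w.natDegree : ℕ) : WithBot ℕ) < (c : WithBot ℕ))
  have hinj : Function.Injective φ := by
    rintro ⟨w, hw⟩ ⟨w', hw'⟩ h
    have := canon_inj (hdeg ⟨w, hw⟩) (hdeg ⟨w', hw'⟩) h
    have := mul_left_cancel₀ (pow_ne_zero (c - i) (X_ne_zero (R := ZMod p))) this
    exact Subtype.ext this
  have hrange : {g : TPR p c | g * (AdjoinRoot.root (X ^ c : (ZMod p)[X])) ^ i = 0}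
      = Set.range φ := by
    ext g
    simp only [Set.mem_setOf_eq, Set.mem_range]
    constructor
    · intro hg
      have hdvd : (X : (ZMod p)[X]) ^ c ∣ canon g * X ^ i := by
        rw [← AdjoinRoot.mk_eq_zero (f := (X ^ c : (ZMod p)[X])), map_mul, map_pow,
          AdjoinRoot.mk_X, mk_canon]
        exact hg
      have hdvd2 : (X : (ZMod p)[X]) ^ (c - i) ∣ canon g := by
        have : (X : (ZMod p)[X]) ^ (c - i) * X ^ i ∣ canon g * X ^ i := by
          rwa [← pow_add, Nat.sub_add_cancel hic]
        exact (mul_dvd_mul_iff_right (pow_ne_zero i (X_ne_zero (R := ZMod p)))).mp this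
      obtain ⟨w, hw⟩ := hdvd2
      have hwlt : w ∈ degreeLT (ZMod p) i := by
        rw [mem_degreeLT]
        rcases eq_or_ne w 0 with rfl | hw0
        · exact (by exact_mod_cast WithBot.bot_lt_coe i)
        · have hd := degree_canon g
          rw [hw, degree_mul, degree_X_pow, degree_eq_natDegree hw0] at hd
          have : (c - i) + w.natDegree < c := by exact_mod_cast hd
          rw [degree_eq_natDegree hw0]
          exact_mod_cast (by omega : w.natDegree < i)
      exact ⟨⟨w, hwlt⟩, by rw [hφ]; simp only [← hw]; exact mk_canon g⟩
    · rintro ⟨⟨w, hw⟩, rfl⟩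
      show AdjoinRoot.mk (X ^ c) (X ^ (c - i) * w) * (AdjoinRoot.root _) ^ i = 0
      rw [← AdjoinRoot.mk_X, ← map_pow, ← map_mul, AdjoinRoot.mk_eq_zero]
      exact ⟨w, by rw [mul_right_comm, ← pow_add, Nat.sub_add_cancel hic]⟩
  rw [hrange, ← Nat.card_coe_set_eq, Nat.card_range_of_injective hinj,
    Nat.card_congr (Polynomial.degreeLTEquiv (ZMod p) i).toEquiv]
  simp [Nat.card_fun, Nat.card_zmod, Nat.card_eq_fintype_card]

end

/-- In `Γ(𝔽_p[x]/(x^(2b)))`, a vertex `v` with `mindeg v = i` has degree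
`p^i - 1` if `i < b`, and degree `p^i - 2` if `i ≥ b`. -/
theorem stmt_7 (p b : ℕ) [Fact p.Prime] (hb : 1 ≤ b) (v : zd p (2 * b)) :
    (mindeg (v : TPR p (2 * b)) < b →
      ((zdGraph p (2 * b)).neighborSet v).ncard = p ^ mindeg (v : TPR p (2 * b)) - 1) ∧
    (b ≤ mindeg (v : TPR p (2 * b)) →
      ((zdGraph p (2 * b)).neighborSet v).ncard = p ^ mindeg (v : TPR p (2 * b)) - 2) := by
  classical
  obtain ⟨hv0, g0, hg00, hvg0⟩ := v.2
  set i := mindeg (v : TPR p (2 * b)) with hi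
  obtain ⟨u, hu0, hcanon⟩ := canon_factor (v : TPR p (2 * b)) hv0
  set ρ := AdjoinRoot.root (X ^ (2 * b) : (ZMod p)[X]) with hρ
  have hvfac : (v : TPR p (2 * b)) = ρ ^ i * AdjoinRoot.mk _ u := by
    rw [← mk_canon (v : TPR p (2 * b)), hcanon, map_mul, map_pow, AdjoinRoot.mk_X]
  have hunit : IsUnit (AdjoinRoot.mk (X ^ (2 * b)) u) := isUnit_mk hu0
  have hilt : i < 2 * b := mindeg_lt hv0
  set A : Set (TPR p (2 * b)) := {g | g * ρ ^ i = 0} with hA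
  have hann : ∀ g : TPR p (2 * b), g * (v : TPR p (2 * b)) = 0 ↔ g ∈ A := by
    intro g
    rw [hvfac, ← mul_assoc, hunit.mul_left_eq_zero]
    rfl
  have hcardA : A.ncard = p ^ i := card_ann (le_of_lt hilt)
  have h0A : (0 : TPR p (2 * b)) ∈ A := by simp [hA]
  have hvA : (v : TPR p (2 * b)) ∈ A ↔ 2 * b ≤ i + i := by
    rw [hA, Set.mem_setOf_eq, hvfac, mul_right_comm, ← pow_add,
      hunit.mul_left_eq_zero, root_pow_eq_zero_iff]
  have hval : Subtype.val '' ((zdGraph p (2 * b)).neighborSet v)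
      = A \ {0, (v : TPR p (2 * b))} := by
    ext g
    simp only [Set.mem_image, SimpleGraph.mem_neighborSet, Set.mem_diff, Set.mem_insert_iff,
      Set.mem_singleton_iff]
    constructor
    · rintro ⟨⟨g, hgzd⟩, ⟨hne, hmul⟩, rfl⟩
      refine ⟨(hann g).mp (by simpa [mul_comm] using hmul), ?_⟩
      push_neg
      exact ⟨hgzd.1, fun h => hne (Subtype.ext h.symm)⟩
    · rintro ⟨hgA, hg⟩
      push_neg at hg
      obtain ⟨hg0, hgv⟩ := hg
      have hgzd : g ∈ zd p (2 * b) := ⟨hg0, ⟨v, hv0, (hann g).mpr hgA⟩⟩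
      exact ⟨⟨g, hgzd⟩, ⟨fun h => hgv (congrArg Subtype.val h).symm,
        by simpa [mul_comm] using (hann g).mpr hgA⟩, rfl⟩
  have hkey : ((zdGraph p (2 * b)).neighborSet v).ncard
      = (A \ {0, (v : TPR p (2 * b))}).ncard := by
    rw [← hval, Set.ncard_image_of_injective _ Subtype.val_injective]
  constructor
  · intro hib
    have hvnA : (v : TPR p (2 * b)) ∉ A := by
      rw [hvA]; omega
    have heq : A \ {0, (v : TPR p (2 * b))} = A \ {0} := by
      ext g
      simp only [Set.mem_diff, Set.mem_insert_iff, Set.mem_singleton_iff]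
      constructor
      · rintro ⟨h1, h2⟩; push_neg at h2; exact ⟨h1, h2.1⟩
      · rintro ⟨h1, h2⟩
        refine ⟨h1, ?_⟩
        push_neg
        exact ⟨h2, fun h => hvnA (h ▸ h1)⟩
    rw [hkey, heq, Set.ncard_diff_singleton_of_mem h0A, hcardA]
  · intro hbi
    have hvmA : (v : TPR p (2 * b)) ∈ A := by rw [hvA]; omega
    have hsub : {0, (v : TPR p (2 * b))} ⊆ A := by
      intro g hg
      rcases hg with rfl | hg
      · exact h0A
      · rw [Set.mem_singleton_iff] at hg; exact hg ▸ hvmA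
    rw [hkey, Set.ncard_diff hsub, Set.ncard_pair (Ne.symm hv0), hcardA]
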